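/- Let n ≥ 1, q = 2^n, and F_q the finite field with q elements. Let S ⊆ F_q \ {0} be a set of nonzero elements that is closed under inversion, i.e., s ∈ S implies s^{−1} ∈ S. Then the cyclic code C(S) = {(a_1, …, a_{q−1}) ∈ F_q^{q−1} : ∑_{i=1}^{q−1} a_i x^i = 0 for all x ∈ S} is a linear code with complementary dual (LCD): C(S) ∩ C(S)^⊥ = {0}, where C(S)^⊥ = {v ∈ F_q^{q−1} : ∑_{i=1}^{q−1} v_i c_i = 0 for all c ∈ C(S)}. Equivalently, its generator polynomial ∏_{s ∈ S}(X − s) is self-reciprocal. -/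

import Mathlib

open Polynomial

/-- The code `C(S)`: tuples `(a_1, …, a_N)` with `∑_{i=1}^{N} a_i x^i = 0` for all `x ∈ S`,
as a linear subspace of `Fq^N`. -/
def codeC (Fq : Type) [Field Fq] (N : ℕ) (S : Set Fq) : Submodule Fq (Fin N → Fq) where
  carrier := {a | ∀ x ∈ S, ∑ i : Fin N, a i * x ^ ((i : ℕ) + 1) = 0}
  add_mem' := by
    intro a b ha hb x hx
    simp only [Set.mem_setOf_eq] at *
    simp [add_mul, Finset.sum_add_distrib, ha x hx, hb x hx]
  zero_mem' := by intro x hx; simp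
  smul_mem' := by
    intro c a ha x hx
    simp only [Set.mem_setOf_eq] at *
    simp [mul_assoc, ← Finset.mul_sum, ha x hx]


open Finset

section Helpers


lemma rev_lin (Fq : Type) [Field Fq] (s : Fq) (hs : s ≠ 0) :
    (X - C s).reverse = C (-s) * (X - C s⁻¹) := by
  have h1 : (X - C s).reverse = 1 - C s * X := by
    rw [reverse, natDegree_X_sub_C, sub_eq_add_neg, reflect_add, reflect_neg, reflect_C,
      ← pow_one (X : Fq[X]), reflect_monomial]
    simp [revAt_le]
    ring
  rw [h1, mul_sub, ← C_mul, neg_mul, mul_inv_cancel₀ hs]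
  simp only [map_neg, map_one]
  ring

lemma rev_prod (Fq : Type) [Field Fq] [DecidableEq Fq] (S : Finset Fq) :
    (∏ s ∈ S, (X - C s)).reverse = ∏ s ∈ S, (X - C s).reverse := by
  induction S using Finset.induction_on with
  | empty => simp [reverse]
  | insert _ _ h ih => rw [Finset.prod_insert h, reverse_mul_of_domain, ih, Finset.prod_insert h]




variable {Fq : Type} [Field Fq] [Fintype Fq] [DecidableEq Fq]

lemma sum_units_pow_aux {m : ℕ} (h0 : 0 < m) (hm : m < Fintype.card Fq - 1) :
    ∑ u : Fqˣ, ((u : Fq)) ^ m = 0 := by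
  have := FiniteField.sum_pow_units Fq m
  rw [if_neg (fun hdvd => absurd (Nat.le_of_dvd h0 hdvd) (not_le.mpr hm))] at this
  simpa using this

lemma sum_units_cross {N : ℕ} (hN : N = Fintype.card Fq - 1) (i j : Fin N) :
    ∑ u : Fqˣ, (u : Fq) ^ ((i : ℕ) + 1) * ((u⁻¹ : Fqˣ) : Fq) ^ ((j : ℕ) + 1)
      = if i = j then (-1 : Fq) else 0 := by
  rcases lt_trichotomy (i : ℕ) (j : ℕ) with h | h | h
  · rw [if_neg (fun hij => absurd (congrArg Fin.val hij) (Nat.ne_of_lt h))]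
    have key : ∀ u : Fqˣ, (u : Fq) ^ ((i : ℕ) + 1) * ((u⁻¹ : Fqˣ) : Fq) ^ ((j : ℕ) + 1)
        = ((u⁻¹ : Fqˣ) : Fq) ^ ((j : ℕ) - (i : ℕ)) := by
      intro u
      have : (j : ℕ) + 1 = ((j : ℕ) - (i : ℕ)) + ((i : ℕ) + 1) := by omega
      rw [this, pow_add (((u⁻¹:Fqˣ):Fq)) ((j:ℕ)-(i:ℕ)) ((i:ℕ)+1),
        mul_comm (((u⁻¹:Fqˣ):Fq) ^ ((j:ℕ)-(i:ℕ))), ← mul_assoc, ← mul_pow]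
      simp
    rw [Finset.sum_congr rfl fun u _ => key u]
    exact (Fintype.sum_equiv (Equiv.inv Fqˣ) _ (fun u : Fqˣ => ((u : Fq)) ^ ((j:ℕ) - (i:ℕ)))
      (fun u => rfl)).trans (sum_units_pow_aux (by omega) (by omega))
  · rw [if_pos (Fin.ext h)]
    have key : ∀ u : Fqˣ, (u : Fq) ^ ((i : ℕ) + 1) * ((u⁻¹ : Fqˣ) : Fq) ^ ((j : ℕ) + 1)
        = 1 := by
      intro u
      rw [h, ← mul_pow]
      simp
    rw [Finset.sum_congr rfl fun u _ => key u]
    simp only [Finset.sum_const, card_univ, Fintype.card_units, nsmul_eq_mul, mul_one]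
    rw [Nat.cast_sub Fintype.card_pos, FiniteField.cast_card_eq_zero, Nat.cast_one, zero_sub]
  · rw [if_neg (fun hij => absurd (congrArg Fin.val hij) (Nat.ne_of_gt h))]
    have key : ∀ u : Fqˣ, (u : Fq) ^ ((i : ℕ) + 1) * ((u⁻¹ : Fqˣ) : Fq) ^ ((j : ℕ) + 1)
        = (u : Fq) ^ ((i : ℕ) - (j : ℕ)) := by
      intro u
      have : (i : ℕ) + 1 = ((i : ℕ) - (j : ℕ)) + ((j : ℕ) + 1) := by omega
      rw [this, pow_add, mul_assoc, ← mul_pow]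
      simp
    rw [Finset.sum_congr rfl fun u _ => key u]
    exact sum_units_pow_aux (by omega) (by omega)

lemma bilinear_id {N : ℕ} (hN : N = Fintype.card Fq - 1) (a c : Fin N → Fq) :
    ∑ u : Fqˣ, (∑ i : Fin N, a i * (u : Fq) ^ ((i : ℕ) + 1)) *
        (∑ j : Fin N, c j * ((u⁻¹ : Fqˣ) : Fq) ^ ((j : ℕ) + 1))
      = -∑ i : Fin N, a i * c i := by
  have step : ∀ u : Fqˣ, (∑ i : Fin N, a i * (u : Fq) ^ ((i : ℕ) + 1)) *
        (∑ j : Fin N, c j * ((u⁻¹ : Fqˣ) : Fq) ^ ((j : ℕ) + 1))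
      = ∑ i : Fin N, ∑ j : Fin N,
          (a i * c j) * ((u : Fq) ^ ((i:ℕ)+1) * ((u⁻¹ : Fqˣ) : Fq) ^ ((j:ℕ)+1)) := by
    intro u
    rw [Finset.sum_mul_sum]
    exact Finset.sum_congr rfl fun i _ => Finset.sum_congr rfl fun j _ => by ring
  rw [Finset.sum_congr rfl fun u _ => step u, Finset.sum_comm]
  rw [Finset.sum_congr rfl fun i (_ : i ∈ univ) => Finset.sum_comm]
  have inner : ∀ i j : Fin N, ∑ u : Fqˣ,
      (a i * c j) * ((u : Fq) ^ ((i:ℕ)+1) * ((u⁻¹ : Fqˣ) : Fq) ^ ((j:ℕ)+1))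
      = if i = j then -(a i * c i) else 0 := by
    intro i j
    rw [← Finset.mul_sum, sum_units_cross hN i j]
    split_ifs with hij
    · subst hij; ring
    · ring
  rw [Finset.sum_congr rfl fun i (_ : i ∈ univ) =>
    Finset.sum_congr rfl fun j (_ : j ∈ univ) => inner i j]
  simp [Finset.sum_ite_eq]

lemma exists_indicator {N : ℕ} (hN : N = Fintype.card Fq - 1) (hN1 : 1 ≤ N)
    (x₀ : Fq) (hx₀ : x₀ ≠ 0) :
    ∃ c : Fin N → Fq, ∀ x : Fq, x ≠ 0 →
      ∑ i : Fin N, c i * x ^ ((i : ℕ) + 1) = if x = x₀ then 1 else 0 := by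
  set T : Finset Fq := Finset.univ \ {0} with hT
  have hmem : ∀ x : Fq, x ≠ 0 → x ∈ T := by
    intro x hx; simp [hT, hx]
  have hcardT : #T = N := by
    rw [hT, Finset.card_sdiff_of_subset (by simp), Finset.card_singleton, Finset.card_univ, hN]
  set v : Fq → Fq := fun x => if x = x₀ then x₀⁻¹ else 0 with hv
  set P : Fq[X] := Lagrange.interpolate T id v with hP
  have hdeg : P.natDegree < N := by
    by_cases h0 : P = 0
    · rw [h0, natDegree_zero]; omega
    · rw [natDegree_lt_iff_degree_lt h0]
      have := Lagrange.degree_interpolate_lt (s := T) v (Set.injOn_id _)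
      rwa [hcardT] at this
  refine ⟨fun i => P.coeff i, fun x hx => ?_⟩
  have heval : P.eval x = if x = x₀ then x₀⁻¹ else 0 := by
    have := Lagrange.eval_interpolate_at_node v (Set.injOn_id _) (hmem x hx)
    exact this
  calc ∑ i : Fin N, P.coeff i * x ^ ((i : ℕ) + 1)
      = ∑ i ∈ Finset.range N, P.coeff i * x ^ (i + 1) :=
        Fin.sum_univ_eq_sum_range (fun i => P.coeff i * x ^ (i + 1)) N
    _ = x * ∑ i ∈ Finset.range N, P.coeff i * x ^ i := by
        rw [Finset.mul_sum]
        exact Finset.sum_congr rfl fun i _ => by ring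
    _ = x * P.eval x := by rw [← eval_eq_sum_range' hdeg]
    _ = if x = x₀ then 1 else 0 := by
        rw [heval]
        split_ifs with hxx
        · subst hxx; exact mul_inv_cancel₀ hx
        · exact mul_zero x

lemma vec_eq_zero {N : ℕ} (hN : N = Fintype.card Fq - 1) (hN1 : 1 ≤ N) (a : Fin N → Fq)
    (h : ∀ x : Fq, x ≠ 0 → ∑ i : Fin N, a i * x ^ ((i : ℕ) + 1) = 0) : a = 0 := by
  set P : Fq[X] := ∑ i : Fin N, C (a i) * X ^ (i : ℕ) with hP
  have hcoeff : ∀ i : Fin N, P.coeff i = a i := by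
    intro i
    rw [hP, finset_sum_coeff]
    simp [coeff_X_pow, Fin.val_inj]
  have hdeg : P.natDegree < N := by
    by_cases h0 : P = 0
    · rw [h0, natDegree_zero]; omega
    · rw [natDegree_lt_iff_degree_lt h0, hP]
      apply lt_of_le_of_lt (degree_sum_le _ _)
      rw [Finset.sup_lt_iff (by exact_mod_cast WithBot.bot_lt_coe N)]
      intro i _
      apply lt_of_le_of_lt (degree_C_mul_X_pow_le _ _)
      exact_mod_cast i.isLt
  have hzero : P = 0 := by
    apply eq_zero_of_natDegree_lt_card_of_eval_eq_zero' P (Finset.univ \ {0})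
    · intro x hx
      have hx0 : x ≠ 0 := by simpa using (Finset.mem_sdiff.mp hx).2
      have hx' := h x hx0
      have : P.eval x = ∑ i : Fin N, a i * x ^ (i : ℕ) := by
        rw [hP, eval_finset_sum]; simp
      have hxP : x * P.eval x = 0 := by
        rw [this, Finset.mul_sum, ← hx']
        exact Finset.sum_congr rfl fun i _ => by ring
      rcases mul_eq_zero.mp hxP with h1 | h1
      · exact absurd h1 hx0
      · exact h1
    · rw [Finset.card_sdiff_of_subset (by simp), Finset.card_singleton, Finset.card_univ, ← hN]
      exact hdeg
  funext i
  rw [Pi.zero_apply, ← hcoeff i, hzero, coeff_zero]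

end Helpers

theorem codeC_LCD (n : ℕ) (hn : 1 ≤ n) (Fq : Type) [Field Fq] [Fintype Fq]
    [DecidableEq Fq] (hq : Fintype.card Fq = 2 ^ n) (S : Finset Fq)
    (hS0 : (0 : Fq) ∉ S) (hSinv : ∀ s ∈ S, s⁻¹ ∈ S) :
    (∀ a : Fin (2 ^ n - 1) → Fq, a ∈ codeC Fq (2 ^ n - 1) ↑S →
      (∀ c ∈ codeC Fq (2 ^ n - 1) ↑S, ∑ i : Fin (2 ^ n - 1), a i * c i = 0) → a = 0) ∧
    (∏ s ∈ S, (X - C s)) =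
      C ((∏ s ∈ S, (X - C s)).coeff 0)⁻¹ * (∏ s ∈ S, (X - C s)).reverse := by
  have hN : 2 ^ n - 1 = Fintype.card Fq - 1 := by rw [hq]
  have hN1 : 1 ≤ 2 ^ n - 1 := by
    have : 2 ^ 1 ≤ 2 ^ n := Nat.pow_le_pow_right (by norm_num) hn
    omega
  have hchar : CharP Fq 2 := by
    have hd : ringChar Fq ∣ 2 ^ n := by
      rw [← hq, ← CharP.cast_eq_zero_iff Fq (ringChar Fq)]
      exact FiniteField.cast_card_eq_zero Fq
    have hp : (ringChar Fq).Prime := CharP.char_is_prime Fq (ringChar Fq)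
    exact ringChar.of_eq
      ((Nat.prime_dvd_prime_iff_eq hp Nat.prime_two).mp (hp.dvd_of_dvd_pow hd))
  constructor
  · -- LCD part
    intro a ha horth
    apply vec_eq_zero hN hN1 a
    intro x hx
    by_cases hxS : x ∈ S
    · exact ha x (Finset.mem_coe.mpr hxS)
    · set x₀ : Fq := x⁻¹ with hx₀def
      have hx₀ : x₀ ≠ 0 := inv_ne_zero hx
      have hx₀S : x₀ ∉ S := fun hc => hxS (by simpa [hx₀def] using hSinv x₀ hc)
      obtain ⟨c, hc⟩ := exists_indicator hN hN1 x₀ hx₀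
      have hcC : c ∈ codeC Fq (2 ^ n - 1) ↑S := by
        intro s hs
        have hs' : s ∈ S := by exact_mod_cast hs
        have hs0 : s ≠ 0 := fun h => hS0 (h ▸ hs')
        rw [hc s hs0, if_neg ?_]
        intro h
        exact hx₀S (h ▸ hs')
      have horth' := horth c hcC
      have hbil := bilinear_id hN a c
      rw [horth', neg_zero] at hbil
      have hsum : ∑ u : Fqˣ, (∑ i : Fin (2 ^ n - 1), a i * (u : Fq) ^ ((i : ℕ) + 1)) *
          (∑ j : Fin (2 ^ n - 1), c j * ((u⁻¹ : Fqˣ) : Fq) ^ ((j : ℕ) + 1))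
          = ∑ i : Fin (2 ^ n - 1), a i * x ^ ((i : ℕ) + 1) := by
        have step : ∀ u : Fqˣ, (∑ i : Fin (2 ^ n - 1), a i * (u : Fq) ^ ((i : ℕ) + 1)) *
            (∑ j : Fin (2 ^ n - 1), c j * ((u⁻¹ : Fqˣ) : Fq) ^ ((j : ℕ) + 1))
            = if u = Units.mk0 x hx then
                (∑ i : Fin (2 ^ n - 1), a i * (u : Fq) ^ ((i : ℕ) + 1)) else 0 := by
          intro u
          rw [hc ((u⁻¹ : Fqˣ) : Fq) (Units.ne_zero _)]
          have hiff : (((u⁻¹ : Fqˣ) : Fq) = x₀) ↔ u = Units.mk0 x hx := by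
            rw [hx₀def]
            constructor
            · intro h
              ext
              have : ((u : Fq)⁻¹)⁻¹ = (x⁻¹)⁻¹ := by rw [← h]; simp
              simpa using this
            · intro h; subst h; simp
          by_cases h : u = Units.mk0 x hx
          · rw [if_pos ((hiff).mpr h), if_pos h, mul_one]
          · rw [if_neg (fun hh => h (hiff.mp hh)), if_neg h, mul_zero]
        rw [Finset.sum_congr rfl fun u _ => step u,
          Finset.sum_ite_eq' Finset.univ (Units.mk0 x hx)
            (fun u : Fqˣ => ∑ i : Fin (2 ^ n - 1), a i * (u : Fq) ^ ((i : ℕ) + 1)),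
          if_pos (Finset.mem_univ _)]
        simp
      rw [hsum] at hbil
      exact hbil
  · -- self-reciprocal part
    have hc0 : (∏ s ∈ S, (X - C s)).coeff 0 = ∏ s ∈ S, s := by
      rw [coeff_zero_eq_eval_zero, eval_prod]
      refine Finset.prod_congr rfl fun s hs => ?_
      simp [CharTwo.neg_eq]
    rw [rev_prod, hc0]
    have h2 : ∏ s ∈ S, (X - C s).reverse = C (∏ s ∈ S, s) * ∏ s ∈ S, (X - C s⁻¹) := by
      rw [Finset.prod_congr rfl fun s hs => rev_lin Fq s (fun h => hS0 (h ▸ hs)),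
        Finset.prod_mul_distrib]
      congr 1
      rw [← map_prod]
      congr 1
      rw [Finset.prod_congr rfl fun s _ => (CharTwo.neg_eq s)]
    have h3 : ∏ s ∈ S, (X - C s⁻¹) = ∏ s ∈ S, (X - C s) := by
      refine Finset.prod_nbij (fun s => s⁻¹) (fun s hs => hSinv s hs) ?_ ?_ ?_
      · intro p hp b hb hab
        simpa using congrArg (·⁻¹) hab
      · intro b hb
        exact ⟨b⁻¹, hSinv b hb, by simp⟩
      · intro p hp; rfl
    rw [h2, h3, ← mul_assoc, ← C_mul]
    have hP : (∏ s ∈ S, s) ≠ 0 := Finset.prod_ne_zero_iff.mpr fun s hs h => hS0 (h ▸ hs)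
    rw [inv_mul_cancel₀ hP, C_1, one_mul]
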